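/- With the structures as in the standard setup and θₐ := φₐφ - ξₐ⊗η, one has -θₐθₐ₊₁ + (φξₐ)⊗(ηₐ₊₁∘φ) = φₐ₊₂ = θₐ₊₁θₐ - (φξₐ₊₁)⊗(ηₐ∘φ) (indices mod 3), i.e. for all X: -θₐθₐ₊₁X + ηₐ₊₁(φX)φξₐ = φₐ₊₂X. -/

import Mathlib

open RealInnerProductSpace

/-- Pointwise setup on a real inner product space: an almost contact metric
structure `(φ, ξ, η)` together with an almost contact metric 3-structure
`(φₐ, ξₐ, ηₐ)`, `a ∈ ZMod 3`, satisfying the quaternionic contact relations and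
the compatibility relations coming from `JJₐ = JₐJ`.  Here `η x = ⟪x, ξ⟫` and
`ηₐ x = ⟪x, ξₐ⟫`. -/
structure ContactSetup (V : Type*) [NormedAddCommGroup V] [InnerProductSpace ℝ V] where
  φ : V →ₗ[ℝ] V
  ξ : V
  φa : ZMod 3 → (V →ₗ[ℝ] V)
  ξa : ZMod 3 → V
  φ_sq : ∀ x, φ (φ x) = -x + ⟪x, ξ⟫ • ξ
  ξ_unit : ⟪ξ, ξ⟫ = 1
  φ_ξ : φ ξ = 0
  φ_metric : ∀ x y, ⟪φ x, φ y⟫ = ⟪x, y⟫ - ⟪x, ξ⟫ * ⟪y, ξ⟫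
  φa_sq : ∀ a x, φa a (φa a x) = -x + ⟪x, ξa a⟫ • ξa a
  ξa_unit : ∀ a, ⟪ξa a, ξa a⟫ = 1
  φa_ξa : ∀ a, φa a (ξa a) = 0
  φa_metric : ∀ a x y, ⟪φa a x, φa a y⟫ = ⟪x, y⟫ - ⟪x, ξa a⟫ * ⟪y, ξa a⟫
  quat₁ : ∀ a x, φa a (φa (a + 1) x) - ⟪x, ξa (a + 1)⟫ • ξa a = φa (a + 2) x
  quat₂ : ∀ a x, φa (a + 2) x = -(φa (a + 1) (φa a x)) + ⟪x, ξa a⟫ • ξa (a + 1)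
  quat_ξ₁ : ∀ a, φa a (ξa (a + 1)) = ξa (a + 2)
  quat_ξ₂ : ∀ a, ξa (a + 2) = -(φa (a + 1) (ξa a))
  inter : ∀ a x, φa a (φ x) - ⟪x, ξ⟫ • ξa a = φ (φa a x) - ⟪x, ξa a⟫ • ξ
  inter_ξ : ∀ a, φ (ξa a) = φa a ξ

/-- The local symmetric tensor `θₐ := φₐφ - ξₐ ⊗ η`. -/
def ContactSetup.θa {V : Type*} [NormedAddCommGroup V] [InnerProductSpace ℝ V]
    (S : ContactSetup V) (a : ZMod 3) (x : V) : V :=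
  S.φa a (S.φ x) - ⟪x, S.ξ⟫ • S.ξa a

namespace ContactSetup

variable {V : Type*} [NormedAddCommGroup V] [InnerProductSpace ℝ V] (S : ContactSetup V)

lemma eta_phi (x : V) : ⟪S.φ x, S.ξ⟫ = 0 := by
  have h1 : S.φ (S.φ (S.φ x)) = -(S.φ x) + ⟪S.φ x, S.ξ⟫ • S.ξ := S.φ_sq _
  have h2 : S.φ (S.φ (S.φ x)) = -(S.φ x) := by
    have : S.φ (S.φ (S.φ x)) = S.φ (-x + ⟪x, S.ξ⟫ • S.ξ) := by rw [S.φ_sq x]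
    simpa [S.φ_ξ] using this
  have h3 : ⟪S.φ x, S.ξ⟫ • S.ξ = 0 := by
    rw [h2] at h1
    exact left_eq_add.mp h1
  have h4 := congrArg (fun v => ⟪v, S.ξ⟫) h3
  simp only [real_inner_smul_left, S.ξ_unit, inner_zero_left, mul_one] at h4
  exact h4

lemma eta_a_phi_a (b : ZMod 3) (x : V) : ⟪S.φa b x, S.ξa b⟫ = 0 := by
  have h1 : S.φa b (S.φa b (S.φa b x)) = -(S.φa b x) + ⟪S.φa b x, S.ξa b⟫ • S.ξa b :=
    S.φa_sq _ _
  have h2 : S.φa b (S.φa b (S.φa b x)) = -(S.φa b x) := by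
    have : S.φa b (S.φa b (S.φa b x)) = S.φa b (-x + ⟪x, S.ξa b⟫ • S.ξa b) := by
      rw [S.φa_sq b x]
    simpa [S.φa_ξa] using this
  have h3 : ⟪S.φa b x, S.ξa b⟫ • S.ξa b = 0 := by
    rw [h2] at h1
    exact left_eq_add.mp h1
  have h4 := congrArg (fun v => ⟪v, S.ξa b⟫) h3
  simp only [real_inner_smul_left, S.ξa_unit, inner_zero_left, mul_one] at h4
  exact h4

lemma phi_skew (x y : V) : ⟪S.φ x, y⟫ = -⟪x, S.φ y⟫ := by
  have h := S.φ_metric x (S.φ y)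
  rw [S.φ_sq y] at h
  simp [inner_add_right, real_inner_smul_right, S.eta_phi] at h
  linarith

lemma phia_skew (b : ZMod 3) (x y : V) : ⟪S.φa b x, y⟫ = -⟪x, S.φa b y⟫ := by
  have h := S.φa_metric b x (S.φa b y)
  rw [S.φa_sq b y] at h
  simp [inner_add_right, real_inner_smul_right, S.eta_a_phi_a] at h
  linarith

lemma phi_theta (b : ZMod 3) (x : V) :
    S.φ (S.θa b x) = -(S.φa b x) + ⟪S.φ x, S.ξa b⟫ • S.ξ := by
  have hi := S.inter b (S.φ x)
  rw [S.eta_phi] at hi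
  have h1 : S.φ (S.φa b (S.φ x))
      = S.φa b (S.φ (S.φ x)) + ⟪S.φ x, S.ξa b⟫ • S.ξ := by
    have := hi
    simp only [zero_smul, sub_zero] at this
    rw [this]; abel
  have h2 : S.φa b (S.φ (S.φ x)) = -(S.φa b x) + ⟪x, S.ξ⟫ • S.φa b S.ξ := by
    rw [S.φ_sq x]; simp
  show S.φ (S.φa b (S.φ x) - ⟪x, S.ξ⟫ • S.ξa b) = _
  rw [map_sub, map_smul, h1, h2, S.inter_ξ]
  module

lemma eta_theta (b : ZMod 3) (x : V) : ⟪S.θa b x, S.ξ⟫ = -⟪x, S.ξa b⟫ := by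
  have h1 : ⟪S.φa b (S.φ x), S.ξ⟫ = -⟪S.φ x, S.φa b S.ξ⟫ := S.phia_skew b _ _
  rw [← S.inter_ξ] at h1
  have h2 : ⟪S.φ x, S.φ (S.ξa b)⟫ = -⟪x, S.φ (S.φ (S.ξa b))⟫ := S.phi_skew _ _
  rw [S.φ_sq (S.ξa b)] at h2
  simp only [inner_add_right, inner_neg_right, real_inner_smul_right] at h2
  show ⟪S.φa b (S.φ x) - ⟪x, S.ξ⟫ • S.ξa b, S.ξ⟫ = _
  rw [inner_sub_left, real_inner_smul_left, h1, h2]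
  rw [real_inner_comm S.ξ (S.ξa b)]
  ring

lemma theta_theta (b c : ZMod 3) (x : V) :
    S.θa c (S.θa b x) = -(S.φa c (S.φa b x)) + ⟪S.φ x, S.ξa b⟫ • S.φa c S.ξ
      + ⟪x, S.ξa b⟫ • S.ξa c := by
  have hu := S.phi_theta b x
  have he := S.eta_theta b x
  show S.φa c (S.φ (S.θa b x)) - ⟪S.θa b x, S.ξ⟫ • S.ξa c = _
  rw [hu, he, map_add, map_neg, map_smul]
  module

end ContactSetup

/-- `-θₐθₐ₊₁ + (φξₐ)⊗(ηₐ₊₁∘φ) = φₐ₊₂ = θₐ₊₁θₐ - (φξₐ₊₁)⊗(ηₐ∘φ)`. -/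
theorem theta_a_theta_a1 {V : Type*} [NormedAddCommGroup V] [InnerProductSpace ℝ V]
    (S : ContactSetup V) (a : ZMod 3) (x : V) :
    -(S.θa a (S.θa (a + 1) x)) + ⟪S.φ x, S.ξa (a + 1)⟫ • S.φ (S.ξa a) = S.φa (a + 2) x ∧
    S.φa (a + 2) x = S.θa (a + 1) (S.θa a x) - ⟪S.φ x, S.ξa a⟫ • S.φ (S.ξa (a + 1)) := by
  constructor
  · rw [S.theta_theta (a + 1) a x, S.inter_ξ, ← S.quat₁ a x]
    module
  · rw [S.theta_theta a (a + 1) x, S.inter_ξ, S.quat₂ a x]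
    module
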